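/- arXiv:0907.1618 — 2 statements merged into one kernel-verified Lean document; each statement's English description precedes it below -/
import Mathlib

section
/- Let H ∈ (1/2, 1), B^H a fractional Brownian motion on [0,T], {θ_n} a sequence of partitions with mesh |θ_n| → 0, and A^{θ_n} the discrete predictable compensators with respect to the natural filtration. Then E[sup_{t∈θ_n} ((B^H)^{θ_n}_t − A^{θ_n}_t)²] ≤ 4 T |θ_n|^{2H−1}, which tends to 0. -/
open MeasureTheory Finset Filter

namespace FBMAux
variable {Ω : Type*} {m m0 : MeasurableSpace Ω} {μ : Measure Ω} [IsProbabilityMeasure μ]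

lemma integrable_mul2 {f g : Ω → ℝ} (hf : MemLp f 2 μ) (hg : MemLp g 2 μ) :
    Integrable (fun ω => f ω * g ω) μ := by
  refine Integrable.mono' ((hf.integrable_sq.add hg.integrable_sq).const_mul (1/2 : ℝ))
    (hf.aestronglyMeasurable.mul hg.aestronglyMeasurable) (ae_of_all _ fun ω => ?_)
  have h := two_mul_le_add_sq (|f ω|) (|g ω|)
  rw [Real.norm_eq_abs, abs_mul]
  simp only [sq_abs, Pi.add_apply] at h ⊢
  nlinarith [abs_nonneg (f ω), abs_nonneg (g ω)]

lemma memLp2_condExp (hm : m ≤ m0) {f : Ω → ℝ} (hf : MemLp f 2 μ) :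
    MemLp (μ[f|m]) 2 μ := by
  haveI : SigmaFinite (μ.trim hm) := by infer_instance
  have hfi : Integrable f μ := hf.integrable one_le_two
  have hcoe : ((condExpL2 ℝ ℝ hm (hf.toLp f) : Lp ℝ 2 μ) : Ω → ℝ) =ᵐ[μ] μ[f|m] := by
    refine ae_eq_condExp_of_forall_setIntegral_eq hm hfi
      (fun s _ _ => ((Lp.memLp _).integrable one_le_two).integrableOn)
      (fun s hs hμs => ?_) (aestronglyMeasurable_condExpL2 hm _)
    rw [integral_condExpL2_eq hm (hf.toLp f) hs hμs.ne]
    exact setIntegral_congr_ae (hm s hs) ((hf.coeFn_toLp).mono fun x hx _ => hx)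
  exact (Lp.memLp _).ae_eq hcoe

lemma pull_out (hm : m ≤ m0) {f g : Ω → ℝ} (hgm : StronglyMeasurable[m] g)
    (hf : MemLp f 2 μ) (hg : MemLp g 2 μ) :
    ∫ ω, g ω * f ω ∂μ = ∫ ω, g ω * (μ[f|m]) ω ∂μ := by
  haveI : SigmaFinite (μ.trim hm) := by infer_instance
  have h1 : Integrable (fun ω => g ω * f ω) μ := integrable_mul2 hg hf
  have h2 : μ[g * f|m] =ᵐ[μ] g * μ[f|m] :=
    condExp_mul_of_stronglyMeasurable_left hgm h1 (hf.integrable one_le_two)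
  calc ∫ ω, g ω * f ω ∂μ = ∫ ω, (μ[g * f|m]) ω ∂μ := (integral_condExp hm).symm
    _ = ∫ ω, g ω * (μ[f|m]) ω ∂μ := integral_congr_ae h2

lemma abs_condExp_le (hm : m ≤ m0) {f : Ω → ℝ} (hf : Integrable f μ) :
    (fun ω => |(μ[f|m]) ω|) ≤ᵐ[μ] μ[(fun ω => |f ω|)|m] := by
  haveI : SigmaFinite (μ.trim hm) := by infer_instance
  filter_upwards [condExp_mono hf hf.abs
      (ae_of_all μ (fun x => le_abs_self (f x))),
    EventuallyLE.trans (condExp_neg (m := m) f).symm.le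
      (condExp_mono hf.neg hf.abs (ae_of_all μ (fun x => neg_le_abs (f x))))] with x hx₁ hx₂
  simp only [Pi.neg_apply] at hx₂
  exact abs_le.mpr ⟨by linarith, hx₁⟩

lemma sm_abs {Ω : Type*} {m : MeasurableSpace Ω} {f : Ω → ℝ}
    (hf : StronglyMeasurable[m] f) : StronglyMeasurable[m] (fun ω => |f ω|) :=
  (hf.measurable.abs).stronglyMeasurable

lemma sm_max {Ω : Type*} {m : MeasurableSpace Ω} {f g : Ω → ℝ}
    (hf : StronglyMeasurable[m] f) (hg : StronglyMeasurable[m] g) :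
    StronglyMeasurable[m] (fun ω => max (f ω) (g ω)) :=
  (hf.measurable.max hg.measurable).stronglyMeasurable

/-- Running maximum of `|f|`. -/
noncomputable def runMax (f : ℕ → ℝ) : ℕ → ℝ
  | 0 => |f 0|
  | (k+1) => max (runMax f k) |f (k+1)|

lemma runMax_nonneg (f : ℕ → ℝ) : ∀ n, 0 ≤ runMax f n
  | 0 => abs_nonneg _
  | (k+1) => le_trans (runMax_nonneg f k) (le_max_left _ _)

lemma runMax_mono (f : ℕ → ℝ) : Monotone (runMax f) :=
  monotone_nat_of_le_succ fun k => le_max_left _ _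

lemma abs_le_runMax (f : ℕ → ℝ) {k n : ℕ} (h : k ≤ n) : |f k| ≤ runMax f n := by
  refine le_trans ?_ (runMax_mono f h)
  cases k with
  | zero => exact le_of_eq rfl
  | succ k => exact le_max_right _ _

/-- Pathwise Doob-type inequality. -/
lemma pathwise (f : ℕ → ℝ) : ∀ n,
    (runMax f n) ^ 2 + 2 * ∑ k ∈ range n, runMax f k * (|f (k + 1)| - |f k|)
      ≤ 2 * |f n| * runMax f n := by
  intro n
  induction n with
  | zero =>
    simp only [runMax, range_zero, sum_empty, mul_zero, add_zero]
    nlinarith [sq_abs (f 0), sq_nonneg (f 0)]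
  | succ n ih =>
    rw [sum_range_succ]
    have hs : 0 ≤ runMax f n := runMax_nonneg f n
    rcases max_cases (runMax f n) (|f (n+1)|) with ⟨hmax, hle⟩ | ⟨hmax, hlt⟩ <;>
      · simp only [runMax, hmax]
        nlinarith [sq_nonneg (runMax f n - |f (n+1)|)]

end FBMAux

open FBMAux

/-- For `H ∈ (1/2,1)` and partitions `θ_n` with mesh tending to `0`, the compensated
discretization of a fractional Brownian motion satisfies
`E[sup_{t ∈ θ_n} ((B^H)^{θ_n}_t - A^{θ_n}_t)²] ≤ 4 T |θ_n|^{2H-1} → 0`. -/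
theorem fBm_sup_compensated_bound
    {Ω : Type*} {m0 : MeasurableSpace Ω} (μ : Measure Ω) [IsProbabilityMeasure μ]
    (H : ℝ) (hH : H ∈ Set.Ioo (1 / 2 : ℝ) 1)
    (ℱ : ℝ → MeasurableSpace Ω) (hℱ_le : ∀ r, ℱ r ≤ m0)
    (hℱ_mono : ∀ r u : ℝ, r ≤ u → ℱ r ≤ ℱ u)
    (B : ℝ → Ω → ℝ)
    (hB_sq : ∀ u : ℝ, 0 ≤ u → MemLp (B u) 2 μ)
    (hB_adapted : ∀ u : ℝ, 0 ≤ u → StronglyMeasurable[ℱ u] (B u))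
    (hB0 : B 0 =ᵐ[μ] 0)
    (hB_var : ∀ u v : ℝ, 0 ≤ u → u ≤ v →
      ∫ ω, (B v ω - B u ω) ^ 2 ∂μ = (v - u) ^ (2 * H))
    (T : ℝ) (hT : 0 < T)
    (K : ℕ → ℕ) (hK : ∀ n, 0 < K n)
    (t : ℕ → ℕ → ℝ) (ht0 : ∀ n, t n 0 = 0) (htK : ∀ n, t n (K n) = T)
    (ht_mono : ∀ n, ∀ k < K n, t n k < t n (k + 1))
    (mesh : ℕ → ℝ)
    (hmesh : ∀ n, mesh n = (Finset.range (K n)).sup'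
      (by simp [Nat.pos_iff_ne_zero.mp (hK n)]) (fun k => t n (k + 1) - t n k))
    (hmesh0 : Tendsto mesh atTop (nhds 0))
    (A : ℕ → ℕ → Ω → ℝ)
    (hA : ∀ n k, A n k = fun ω =>
      ∑ j ∈ Finset.range k, (μ[B (t n (j + 1)) - B (t n j) | ℱ (t n j)]) ω) :
    (∀ n, ∫ ω, (Finset.range (K n + 1)).sup' (by simp)
        (fun k => (B (t n k) ω - A n k ω) ^ 2) ∂μ
      ≤ 4 * T * mesh n ^ (2 * H - 1)) ∧
    Tendsto (fun n => 4 * T * mesh n ^ (2 * H - 1)) atTop (nhds 0) := by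
  obtain ⟨hH1, hH2⟩ := hH
  have hexp : 0 < 2 * H - 1 := by linarith
  constructor
  · intro n
    -- monotonicity of partition points
    have ht_le : ∀ j k : ℕ, j ≤ k → k ≤ K n → t n j ≤ t n k := by
      intro j k hjk hk
      induction k with
      | zero => rw [Nat.le_zero.mp hjk]
      | succ k ih =>
        rcases Nat.eq_or_lt_of_le hjk with h | h
        · rw [h]
        · exact le_trans (ih (Nat.lt_succ_iff.mp h) (le_trans (Nat.le_succ k) hk))
            (le_of_lt (ht_mono n k (Nat.lt_of_succ_le hk)))
    have htnn : ∀ k, k ≤ K n → 0 ≤ t n k := by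
      intro k hk; rw [← ht0 n]; exact ht_le 0 k (Nat.zero_le k) hk
    -- basic objects
    set C : ℕ → Ω → ℝ := fun j => μ[B (t n (j + 1)) - B (t n j)|ℱ (t n j)] with hC
    set M : ℕ → Ω → ℝ := fun k => B (t n k) - A n k with hMdef
    have hA' : ∀ k, A n k = fun ω => ∑ j ∈ range k, C j ω := fun k => hA n k
    -- membership and measurability
    have hB2 : ∀ k, k ≤ K n → MemLp (B (t n k)) 2 μ := fun k hk => hB_sq _ (htnn k hk)
    have hD2 : ∀ j, j < K n → MemLp (B (t n (j + 1)) - B (t n j)) 2 μ :=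
      fun j hj => (hB2 (j + 1) hj).sub (hB2 j (le_of_lt hj))
    have hC2 : ∀ j, j < K n → MemLp (C j) 2 μ :=
      fun j hj => memLp2_condExp (hℱ_le _) (hD2 j hj)
    have hA2 : ∀ k, k ≤ K n → MemLp (A n k) 2 μ := by
      intro k hk
      rw [hA' k]
      exact memLp_finset_sum (range k)
        (fun j hj => hC2 j (lt_of_lt_of_le (mem_range.mp hj) hk))
    have hM2 : ∀ k, k ≤ K n → MemLp (M k) 2 μ := fun k hk => (hB2 k hk).sub (hA2 k hk)
    have hCmeas : ∀ j, StronglyMeasurable[ℱ (t n j)] (C j) := fun j => stronglyMeasurable_condExp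
    have hAmeas : ∀ k, k ≤ K n → StronglyMeasurable[ℱ (t n k)] (A n k) := by
      intro k hk
      rw [hA' k]
      refine (Finset.measurable_sum (range k) fun j hj => ?_).stronglyMeasurable
      have hjk : j < k := mem_range.mp hj
      exact (((hCmeas j).mono
        (hℱ_mono _ _ (ht_le j k (le_of_lt hjk) hk))).measurable : _)
    have hMmeas : ∀ k, k ≤ K n → StronglyMeasurable[ℱ (t n k)] (M k) :=
      fun k hk => (hB_adapted _ (htnn k hk)).sub (hAmeas k hk)
    -- martingale property
    have hMk1 : ∀ k, M (k + 1) = B (t n (k + 1)) - (A n k + C k) := by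
      intro k
      funext ω
      simp [hMdef, Pi.sub_apply, Pi.add_apply, hA', sum_range_succ]
    have hmart : ∀ k, k < K n → μ[M (k + 1)|ℱ (t n k)] =ᵐ[μ] M k := by
      intro k hk
      haveI : SigmaFinite (μ.trim (hℱ_le (t n k))) := by infer_instance
      rw [hMk1 k]
      have hBint : Integrable (B (t n (k + 1))) μ := (hB2 (k + 1) hk).integrable one_le_two
      have hACint : Integrable (A n k + C k) μ :=
        ((hA2 k (le_of_lt hk)).integrable one_le_two).add integrable_condExp
      have e1 := condExp_sub (m := ℱ (t n k)) hBint hACint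
      have e2 : μ[A n k + C k|ℱ (t n k)] = A n k + C k :=
        condExp_of_stronglyMeasurable (hℱ_le _)
          ((hAmeas k (le_of_lt hk)).add (hCmeas k)) hACint
      have e3 := condExp_sub (m := ℱ (t n k)) hBint ((hB2 k (le_of_lt hk)).integrable one_le_two)
      have e4 : μ[B (t n k)|ℱ (t n k)] = B (t n k) :=
        condExp_of_stronglyMeasurable (hℱ_le _) (hB_adapted _ (htnn k (le_of_lt hk)))
          ((hB2 k (le_of_lt hk)).integrable one_le_two)
      rw [e2] at e1
      filter_upwards [e1, e3] with ω h1 h3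
      have hCω : C k ω = (μ[B (t n (k + 1))|ℱ (t n k)]) ω - B (t n k) ω := by
        have hrfl : C k ω = (μ[B (t n (k + 1)) - B (t n k)|ℱ (t n k)]) ω := rfl
        rw [hrfl, h3]
        simp [e4]
      simp only [Pi.sub_apply, Pi.add_apply, hMdef] at h1 ⊢
      rw [h1]
      rw [hCω]
      ring
    have hmartΔ : ∀ k, k < K n →
        μ[M (k + 1) - M k|ℱ (t n k)] =ᵐ[μ] 0 := by
      intro k hk
      haveI : SigmaFinite (μ.trim (hℱ_le (t n k))) := by infer_instance
      have := condExp_sub (m := ℱ (t n k)) ((hM2 (k + 1) hk).integrable one_le_two)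
        ((hM2 k (le_of_lt hk)).integrable one_le_two)
      refine this.trans ?_
      have e4 : μ[M k|ℱ (t n k)] = M k :=
        condExp_of_stronglyMeasurable (hℱ_le _) (hMmeas k (le_of_lt hk))
          ((hM2 k (le_of_lt hk)).integrable one_le_two)
      filter_upwards [hmart k hk] with ω h1
      simp only [Pi.sub_apply, Pi.zero_apply, e4, h1, sub_self]
    -- increment variance bound
    have hΔvar : ∀ k, k < K n →
        ∫ ω, (M (k + 1) ω - M k ω) ^ 2 ∂μ ≤ (t n (k + 1) - t n k) ^ (2 * H) := by
      intro k hk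
      have hΔeq : ∀ ω, M (k + 1) ω - M k ω =
          (B (t n (k + 1)) ω - B (t n k) ω) - C k ω := by
        intro ω
        simp only [hMdef, Pi.sub_apply, hA', sum_range_succ]
        ring
      have hDk : MemLp (fun ω => B (t n (k + 1)) ω - B (t n k) ω) 2 μ := hD2 k hk
      have hCk := hC2 k hk
      have hexpand : (fun ω => (M (k + 1) ω - M k ω) ^ 2) =
          fun ω => ((B (t n (k + 1)) ω - B (t n k) ω) ^ 2 + C k ω ^ 2) -
            2 * (C k ω * (B (t n (k + 1)) ω - B (t n k) ω)) := by
        funext ω; rw [hΔeq ω]; ring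
      have hint1 : Integrable (fun ω => (B (t n (k + 1)) ω - B (t n k) ω) ^ 2) μ :=
        hDk.integrable_sq
      have hint2 : Integrable (fun ω => C k ω ^ 2) μ := hCk.integrable_sq
      have hint3 : Integrable (fun ω => C k ω * (B (t n (k + 1)) ω - B (t n k) ω)) μ :=
        integrable_mul2 hCk hDk
      have hpull : ∫ ω, C k ω * (B (t n (k + 1)) ω - B (t n k) ω) ∂μ = ∫ ω, C k ω ^ 2 ∂μ := by
        have hpe := pull_out (hℱ_le (t n k)) (hCmeas k) (hD2 k hk) hCk
        calc ∫ ω, C k ω * (B (t n (k + 1)) ω - B (t n k) ω) ∂μ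
            = ∫ ω, C k ω * (B (t n (k + 1)) - B (t n k)) ω ∂μ := rfl
          _ = ∫ ω, C k ω * (μ[B (t n (k + 1)) - B (t n k)|ℱ (t n k)]) ω ∂μ := hpe
          _ = ∫ ω, C k ω * C k ω ∂μ := rfl
          _ = ∫ ω, C k ω ^ 2 ∂μ := by simp_rw [sq]
      have e1 : ∫ ω, (((B (t n (k + 1)) ω - B (t n k) ω) ^ 2 + C k ω ^ 2) -
            2 * (C k ω * (B (t n (k + 1)) ω - B (t n k) ω))) ∂μ =
          (∫ ω, ((B (t n (k + 1)) ω - B (t n k) ω) ^ 2 + C k ω ^ 2) ∂μ) -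
            ∫ ω, 2 * (C k ω * (B (t n (k + 1)) ω - B (t n k) ω)) ∂μ :=
        integral_sub (hint1.add hint2) (hint3.const_mul 2)
      have e2 : ∫ ω, ((B (t n (k + 1)) ω - B (t n k) ω) ^ 2 + C k ω ^ 2) ∂μ =
          (∫ ω, (B (t n (k + 1)) ω - B (t n k) ω) ^ 2 ∂μ) + ∫ ω, C k ω ^ 2 ∂μ :=
        integral_add hint1 hint2
      have e3 : ∫ ω, 2 * (C k ω * (B (t n (k + 1)) ω - B (t n k) ω)) ∂μ =
          2 * ∫ ω, C k ω * (B (t n (k + 1)) ω - B (t n k) ω) ∂μ :=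
        integral_const_mul 2 _
      rw [hexpand, e1, e2, e3, hpull]
      have hvar := hB_var (t n k) (t n (k + 1)) (htnn k (le_of_lt hk))
        (le_of_lt (ht_mono n k hk))
      have hC2nn : 0 ≤ ∫ ω, C k ω ^ 2 ∂μ := integral_nonneg fun ω => sq_nonneg _
      rw [← hvar]
      linarith
    -- orthogonality: E[M_K²] ≤ Σ increments
    have hQ : ∀ k, k ≤ K n → ∫ ω, (M k ω) ^ 2 ∂μ ≤
        ∑ j ∈ range k, (t n (j + 1) - t n j) ^ (2 * H) := by
      intro k hk
      induction k with
      | zero =>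
        have hM0 : M 0 =ᵐ[μ] 0 := by
          have : M 0 = B (t n 0) - A n 0 := rfl
          rw [this, hA' 0, ht0 n]
          filter_upwards [hB0] with ω hω
          simp [hω]
        have : ∫ ω, (M 0 ω) ^ 2 ∂μ = 0 := by
          rw [integral_congr_ae (g := fun _ => (0 : ℝ)) ?_, integral_zero]
          filter_upwards [hM0] with ω hω
          simp [hω]
        simp [this]
      | succ k ih =>
        have hk' : k < K n := hk
        have hsplit : (fun ω => (M (k + 1) ω) ^ 2) = fun ω =>
            ((M k ω) ^ 2 + (M (k + 1) ω - M k ω) ^ 2) +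
              2 * (M k ω * (M (k + 1) ω - M k ω)) := by
          funext ω; ring
        have hMk2 := hM2 k (le_of_lt hk')
        have hMΔ2 : MemLp (fun ω => M (k + 1) ω - M k ω) 2 μ :=
          (hM2 (k + 1) hk).sub hMk2
        have hcross : ∫ ω, M k ω * (M (k + 1) ω - M k ω) ∂μ = 0 := by
          rw [pull_out (hℱ_le (t n k)) (hMmeas k (le_of_lt hk')) hMΔ2 hMk2]
          have : (fun ω => M k ω * (μ[fun ω => M (k + 1) ω - M k ω|ℱ (t n k)]) ω)
              =ᵐ[μ] fun _ => (0 : ℝ) := by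
            have h0 : μ[fun ω => M (k + 1) ω - M k ω|ℱ (t n k)] =ᵐ[μ] 0 := hmartΔ k hk'
            filter_upwards [h0] with ω hω
            simp [hω]
          rw [integral_congr_ae this, integral_zero]
        have e1 : ∫ ω, (((M k ω) ^ 2 + (M (k + 1) ω - M k ω) ^ 2) +
              2 * (M k ω * (M (k + 1) ω - M k ω))) ∂μ =
            (∫ ω, ((M k ω) ^ 2 + (M (k + 1) ω - M k ω) ^ 2) ∂μ) +
              ∫ ω, 2 * (M k ω * (M (k + 1) ω - M k ω)) ∂μ :=
          integral_add (hMk2.integrable_sq.add hMΔ2.integrable_sq)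
            ((integrable_mul2 hMk2 hMΔ2).const_mul 2)
        have e2 : ∫ ω, ((M k ω) ^ 2 + (M (k + 1) ω - M k ω) ^ 2) ∂μ =
            (∫ ω, (M k ω) ^ 2 ∂μ) + ∫ ω, (M (k + 1) ω - M k ω) ^ 2 ∂μ :=
          integral_add hMk2.integrable_sq hMΔ2.integrable_sq
        have e3 : ∫ ω, 2 * (M k ω * (M (k + 1) ω - M k ω)) ∂μ =
            2 * ∫ ω, M k ω * (M (k + 1) ω - M k ω) ∂μ := integral_const_mul 2 _
        rw [hsplit, e1, e2, e3, hcross, sum_range_succ]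
        have h1 := ih (le_of_lt hk')
        have h2 := hΔvar k hk'
        linarith
    -- mesh facts
    have hKne : (range (K n)).Nonempty := by
      simpa using Nat.pos_iff_ne_zero.mp (hK n)
    have hΔpos : ∀ k, k < K n → 0 < t n (k + 1) - t n k :=
      fun k hk => sub_pos.mpr (ht_mono n k hk)
    have hΔle : ∀ k, k < K n → t n (k + 1) - t n k ≤ mesh n := by
      intro k hk
      rw [hmesh n]
      exact Finset.le_sup' (fun k => t n (k + 1) - t n k) (mem_range.mpr hk)
    have hsum_bound : ∑ j ∈ range (K n), (t n (j + 1) - t n j) ^ (2 * H)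
        ≤ T * mesh n ^ (2 * H - 1) := by
      have hstep : ∀ j ∈ range (K n), (t n (j + 1) - t n j) ^ (2 * H)
          ≤ (t n (j + 1) - t n j) * mesh n ^ (2 * H - 1) := by
        intro j hj
        have hjK := mem_range.mp hj
        have hp := hΔpos j hjK
        have : (t n (j + 1) - t n j) ^ (2 * H) =
            (t n (j + 1) - t n j) ^ (1 : ℝ) * (t n (j + 1) - t n j) ^ (2 * H - 1) := by
          rw [← Real.rpow_add hp, show (1 : ℝ) + (2 * H - 1) = 2 * H by ring]
        rw [this, Real.rpow_one]
        exact mul_le_mul_of_nonneg_left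
          (Real.rpow_le_rpow hp.le (hΔle j hjK) hexp.le) hp.le
      calc ∑ j ∈ range (K n), (t n (j + 1) - t n j) ^ (2 * H)
          ≤ ∑ j ∈ range (K n), (t n (j + 1) - t n j) * mesh n ^ (2 * H - 1) :=
            Finset.sum_le_sum hstep
        _ = (∑ j ∈ range (K n), (t n (j + 1) - t n j)) * mesh n ^ (2 * H - 1) := by
            rw [← Finset.sum_mul]
        _ = T * mesh n ^ (2 * H - 1) := by
            rw [Finset.sum_range_sub (fun i => t n i), htK n, ht0 n, sub_zero]
    have hMK : ∫ ω, (M (K n) ω) ^ 2 ∂μ ≤ T * mesh n ^ (2 * H - 1) :=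
      le_trans (hQ (K n) le_rfl) hsum_bound
    -- running maximum
    set S : ℕ → Ω → ℝ := fun k ω => runMax (fun j => M j ω) k with hS
    have hSmeas : ∀ k, k ≤ K n → StronglyMeasurable[ℱ (t n k)] (S k) := by
      intro k hk
      induction k with
      | zero =>
        have : S 0 = fun ω => |M 0 ω| := rfl
        rw [this]
        exact sm_abs (hMmeas 0 (Nat.zero_le _))
      | succ k ih =>
        have hk' : k ≤ K n := le_trans (Nat.le_succ k) hk
        have : S (k + 1) = fun ω => max (S k ω) |M (k + 1) ω| := rfl
        rw [this]
        have h1 : StronglyMeasurable[ℱ (t n (k + 1))] (S k) :=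
          (ih hk').mono (hℱ_mono _ _ (ht_le k (k + 1) (Nat.le_succ k) hk))
        exact sm_max h1 (sm_abs (hMmeas (k + 1) hk))
    have hS2 : ∀ k, k ≤ K n → MemLp (S k) 2 μ := by
      intro k hk
      induction k with
      | zero =>
        have : S 0 = |M 0| := rfl
        rw [this]
        exact (hM2 0 (Nat.zero_le _)).abs
      | succ k ih =>
        have hk' : k ≤ K n := le_trans (Nat.le_succ k) hk
        have : S (k + 1) = S k ⊔ |M (k + 1)| := rfl
        rw [this]
        exact (ih hk').sup (hM2 (k + 1) hk).abs
    have hSnn : ∀ k ω, 0 ≤ S k ω := fun k ω => runMax_nonneg _ k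
    -- each drift step has nonnegative expectation
    have hstep_nonneg : ∀ k, k < K n →
        0 ≤ ∫ ω, S k ω * (|M (k + 1) ω| - |M k ω|) ∂μ := by
      intro k hk
      have hSk2 := hS2 k (le_of_lt hk)
      have habs1 : MemLp (fun ω => |M (k + 1) ω|) 2 μ := (hM2 (k + 1) hk).abs
      have habs0 : MemLp (fun ω => |M k ω|) 2 μ := (hM2 k (le_of_lt hk)).abs
      have hsplit : (fun ω => S k ω * (|M (k + 1) ω| - |M k ω|)) =
          fun ω => S k ω * |M (k + 1) ω| - S k ω * |M k ω| := by
        funext ω; ring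
      rw [hsplit, integral_sub (integrable_mul2 hSk2 habs1) (integrable_mul2 hSk2 habs0)]
      have hpull : ∫ ω, S k ω * |M (k + 1) ω| ∂μ =
          ∫ ω, S k ω * (μ[(fun ω => |M (k + 1) ω|)|ℱ (t n k)]) ω ∂μ :=
        pull_out (hℱ_le (t n k)) (hSmeas k (le_of_lt hk)) habs1 hSk2
      have hmono : ∫ ω, S k ω * |M k ω| ∂μ ≤
          ∫ ω, S k ω * (μ[(fun ω => |M (k + 1) ω|)|ℱ (t n k)]) ω ∂μ := by
        refine integral_mono_ae (integrable_mul2 hSk2 habs0)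
          (integrable_mul2 hSk2 (memLp2_condExp (hℱ_le _) habs1)) ?_
        filter_upwards [abs_condExp_le (hℱ_le (t n k))
          ((hM2 (k + 1) hk).integrable one_le_two), hmart k hk] with ω h1 h2
        have : |M k ω| ≤ (μ[(fun ω => |M (k + 1) ω|)|ℱ (t n k)]) ω := by
          rw [← h2]; exact h1
        exact mul_le_mul_of_nonneg_left this (hSnn k ω)
      rw [hpull]
      linarith
    -- final assembly
    have hmain : ∫ ω, (Finset.range (K n + 1)).sup' (by simp)
        (fun k => (B (t n k) ω - A n k ω) ^ 2) ∂μ ≤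
        ∫ ω, (4 * (M (K n) ω) ^ 2 -
          4 * ∑ k ∈ range (K n), S k ω * (|M (k + 1) ω| - |M k ω|)) ∂μ := by
      refine integral_mono_of_nonneg (ae_of_all _ fun ω => ?_)
        ((((hM2 (K n) le_rfl).integrable_sq.const_mul 4).sub
          ((integrable_finset_sum (range (K n)) fun k hk => ?_).const_mul 4))) 
        (ae_of_all _ fun ω => ?_)
      · have h0 : (0 : ℝ) ≤ (B (t n 0) ω - A n 0 ω) ^ 2 := sq_nonneg _
        exact le_trans h0 (Finset.le_sup' (fun k => (B (t n k) ω - A n k ω) ^ 2)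
          (mem_range.mpr (Nat.succ_pos _)))
      · have hkK := mem_range.mp hk
        have hsplit : (fun ω => S k ω * (|M (k + 1) ω| - |M k ω|)) =
            fun ω => S k ω * |M (k + 1) ω| - S k ω * |M k ω| := by
          funext ω; ring
        rw [hsplit]
        exact (integrable_mul2 (hS2 k (le_of_lt hkK)) (hM2 (k + 1) hkK).abs).sub
          (integrable_mul2 (hS2 k (le_of_lt hkK)) (hM2 k (le_of_lt hkK)).abs)
      · refine Finset.sup'_le _ _ fun k hk => ?_
        have hkK : k ≤ K n := Nat.lt_succ_iff.mp (mem_range.mp hk)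
        have h1 : (B (t n k) ω - A n k ω) ^ 2 = (M k ω) ^ 2 := rfl
        have h2 : |M k ω| ≤ S (K n) ω := abs_le_runMax (fun j => M j ω) hkK
        have h3 : (M k ω) ^ 2 ≤ (S (K n) ω) ^ 2 := by
          rw [← sq_abs (M k ω)]
          exact pow_le_pow_left₀ (abs_nonneg _) h2 2
        have hpath := pathwise (fun j => M j ω) (K n)
        have hSKnn := hSnn (K n) ω
        rw [h1]
        refine le_trans h3 ?_
        simp only [hS] at hSKnn ⊢
        nlinarith [sq_nonneg (runMax (fun j => M j ω) (K n) - 2 * |M (K n) ω|),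
          sq_abs (M (K n) ω)]
    have hrhs : ∫ ω, (4 * (M (K n) ω) ^ 2 -
          4 * ∑ k ∈ range (K n), S k ω * (|M (k + 1) ω| - |M k ω|)) ∂μ
        ≤ 4 * T * mesh n ^ (2 * H - 1) := by
      have hint_sum : Integrable
          (fun ω => ∑ k ∈ range (K n), S k ω * (|M (k + 1) ω| - |M k ω|)) μ := by
        refine integrable_finset_sum (range (K n)) fun k hk => ?_
        have hkK := mem_range.mp hk
        have hsplit : (fun ω => S k ω * (|M (k + 1) ω| - |M k ω|)) =
            fun ω => S k ω * |M (k + 1) ω| - S k ω * |M k ω| := by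
          funext ω; ring
        rw [hsplit]
        exact (integrable_mul2 (hS2 k (le_of_lt hkK)) (hM2 (k + 1) hkK).abs).sub
          (integrable_mul2 (hS2 k (le_of_lt hkK)) (hM2 k (le_of_lt hkK)).abs)
      rw [integral_sub ((hM2 (K n) le_rfl).integrable_sq.const_mul 4)
        (hint_sum.const_mul 4), integral_const_mul, integral_const_mul]
      have hsum_nn : 0 ≤ ∫ ω, ∑ k ∈ range (K n), S k ω * (|M (k + 1) ω| - |M k ω|) ∂μ := by
        rw [integral_finset_sum (range (K n)) fun k hk => ?_]
        · exact Finset.sum_nonneg fun k hk => hstep_nonneg k (mem_range.mp hk)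
        · have hkK := mem_range.mp hk
          have hsplit : (fun ω => S k ω * (|M (k + 1) ω| - |M k ω|)) =
              fun ω => S k ω * |M (k + 1) ω| - S k ω * |M k ω| := by
            funext ω; ring
          rw [hsplit]
          exact (integrable_mul2 (hS2 k (le_of_lt hkK)) (hM2 (k + 1) hkK).abs).sub
            (integrable_mul2 (hS2 k (le_of_lt hkK)) (hM2 k (le_of_lt hkK)).abs)
      nlinarith [hMK]
    exact le_trans hmain hrhs
  · have hcont : ContinuousAt (fun x : ℝ => 4 * T * x ^ (2 * H - 1)) 0 := by
      exact (continuousAt_const.mul (Real.continuousAt_rpow_const 0 (2 * H - 1)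
        (Or.inr hexp.le)))
    have := hcont.tendsto.comp hmesh0
    simpa [Function.comp_def, Real.zero_rpow (ne_of_gt hexp)] using this
end

section
/- For the covariance function R(t,s) = ½(t^{2H} + s^{2H} − |t−s|^{2H}) with H ∈ (0,1), R is symmetric and positive semidefinite on [0,∞): for all n, all t_1,…,t_n ≥ 0, and all real a_1,…,a_n, Σ_{i,j} a_i a_j R(t_i,t_j) ≥ 0. -/
open MeasureTheory Real Set

lemma fBm_aux_integrable {H : ℝ} (hH0 : 0 < H) (hH1 : H < 1) (x : ℝ) :
    IntegrableOn (fun u : ℝ => (1 - Real.cos (x * u)) * u ^ (-1 - 2 * H)) (Set.Ioi 0) := by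
  have hmeas : ∀ s : Set ℝ, AEStronglyMeasurable
      (fun u : ℝ => (1 - Real.cos (x * u)) * u ^ (-1 - 2 * H)) (volume.restrict s) := by
    intro s
    refine Measurable.aestronglyMeasurable ?_
    have : Measurable fun u : ℝ => u ^ (-1 - 2*H) := by measurability
    exact (((measurable_const.sub
      (Real.continuous_cos.measurable.comp (measurable_const_mul x))).mul
      this))
  have h01 : IntegrableOn (fun u : ℝ => (1 - Real.cos (x * u)) * u ^ (-1 - 2 * H)) (Ioc 0 1) := by
    have hg : IntegrableOn (fun u : ℝ => x ^ 2 / 2 * u ^ (1 - 2 * H)) (Ioc 0 1) := by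
      have := (intervalIntegral.intervalIntegrable_rpow' (a := 0) (b := 1) (r := 1 - 2 * H) (by linarith))
      exact ((intervalIntegrable_iff_integrableOn_Ioc_of_le zero_le_one).mp this).const_mul _
    refine Integrable.mono hg (hmeas _) ?_
    filter_upwards [ae_restrict_mem measurableSet_Ioc] with u hu
    have hu0 : 0 < u := hu.1
    have h1 : 0 ≤ 1 - Real.cos (x * u) := by nlinarith [Real.cos_le_one (x * u)]
    have h2 : (0:ℝ) ≤ u ^ (-1 - 2 * H) := Real.rpow_nonneg hu0.le _
    rw [norm_of_nonneg (mul_nonneg h1 h2)]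
    have hb : 1 - Real.cos (x * u) ≤ (x * u) ^ 2 / 2 := by
      nlinarith [Real.one_sub_sq_div_two_le_cos (x := x * u)]
    have hrw : u ^ (1 - 2 * H) = u ^ (2:ℝ) * u ^ (-1 - 2 * H) := by
      rw [← Real.rpow_add hu0]; ring_nf
    have hu2 : u ^ (2:ℝ) = u ^ 2 := by
      rw [show (2:ℝ) = ((2:ℕ):ℝ) by norm_num, Real.rpow_natCast]
    calc (1 - Real.cos (x * u)) * u ^ (-1 - 2 * H)
        ≤ (x * u) ^ 2 / 2 * u ^ (-1 - 2 * H) := by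
          exact mul_le_mul_of_nonneg_right hb h2
      _ ≤ ‖x ^ 2 / 2 * u ^ (1 - 2 * H)‖ := by
          rw [hrw, hu2]
          rw [norm_of_nonneg (by positivity)]
          ring_nf; nlinarith [Real.rpow_nonneg hu0.le (-1 - 2*H), sq_nonneg x, sq_nonneg u]
  have h1i : IntegrableOn (fun u : ℝ => (1 - Real.cos (x * u)) * u ^ (-1 - 2 * H)) (Ioi 1) := by
    have hg : IntegrableOn (fun u : ℝ => 2 * u ^ (-1 - 2 * H)) (Ioi 1) :=
      (integrableOn_Ioi_rpow_of_lt (by linarith) one_pos).const_mul 2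
    refine Integrable.mono hg (hmeas _) ?_
    filter_upwards [ae_restrict_mem measurableSet_Ioi] with u hu
    have hu0 : (0:ℝ) < u := lt_trans one_pos hu
    have h1 : 0 ≤ 1 - Real.cos (x * u) := by nlinarith [Real.cos_le_one (x * u)]
    have h2 : (0:ℝ) ≤ u ^ (-1 - 2 * H) := Real.rpow_nonneg hu0.le _
    rw [norm_of_nonneg (mul_nonneg h1 h2), norm_of_nonneg (by positivity)]
    nlinarith [Real.neg_one_le_cos (x * u)]
  have := h01.union h1i
  rwa [Ioc_union_Ioi_eq_Ioi zero_le_one] at this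

lemma fBm_aux_scaling {H : ℝ} (hH0 : 0 < H) {x : ℝ} (hx : 0 ≤ x) :
    (∫ u in Ioi (0:ℝ), (1 - Real.cos (x * u)) * u ^ (-1 - 2 * H))
      = x ^ (2 * H) * ∫ u in Ioi (0:ℝ), (1 - Real.cos u) * u ^ (-1 - 2 * H) := by
  rcases eq_or_lt_of_le hx with rfl | hx
  · simp [Real.zero_rpow (by positivity : (2 * H) ≠ 0)]
  · have key : ∀ u ∈ Ioi (0:ℝ), (1 - Real.cos (x * u)) * u ^ (-1 - 2 * H)
        = x ^ (1 + 2 * H) * ((1 - Real.cos (x * u)) * (x * u) ^ (-1 - 2 * H)) := by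
      intro u hu
      have hu0 : (0:ℝ) < u := hu
      rw [Real.mul_rpow hx.le hu0.le]
      have : x ^ (1 + 2 * H) * x ^ (-1 - 2 * H) = 1 := by
        rw [← Real.rpow_add hx]; norm_num
      calc (1 - Real.cos (x * u)) * u ^ (-1 - 2 * H)
          = (x ^ (1 + 2 * H) * x ^ (-1 - 2 * H)) * ((1 - Real.cos (x * u)) * u ^ (-1 - 2 * H)) :=
            by rw [this, one_mul]
        _ = x ^ (1 + 2 * H) * ((1 - Real.cos (x * u)) * (x ^ (-1 - 2 * H) * u ^ (-1 - 2 * H))) :=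
            by ring
    rw [setIntegral_congr_fun measurableSet_Ioi key, integral_const_mul]
    have := MeasureTheory.integral_comp_mul_left_Ioi
      (g := fun v : ℝ => (1 - Real.cos v) * v ^ (-1 - 2 * H)) 0 hx
    rw [mul_zero] at this
    rw [this, smul_eq_mul, ← mul_assoc]
    congr 1
    rw [← Real.rpow_neg_one x, ← Real.rpow_add hx]
    ring_nf

lemma fBm_aux_I_pos {H : ℝ} (hH0 : 0 < H) (hH1 : H < 1)
    (hint : IntegrableOn (fun u : ℝ => (1 - Real.cos u) * u ^ (-1 - 2 * H)) (Set.Ioi 0)) :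
    0 < ∫ u in Ioi (0:ℝ), (1 - Real.cos u) * u ^ (-1 - 2 * H) := by
  rw [setIntegral_pos_iff_support_of_nonneg_ae ?_ hint]
  · refine lt_of_lt_of_le ?_ (measure_mono (?_ : Ioo 0 π ⊆ _))
    · rw [Real.volume_Ioo]
      simp [Real.pi_pos]
    · intro u hu
      have hu0 : 0 < u := hu.1
      have hlt : Real.cos u < 1 := by
        rcases lt_or_eq_of_le (Real.cos_le_one u) with h | h
        · exact h
        · exfalso
          have := (Real.cos_eq_one_iff_of_lt_of_lt
            (by nlinarith [Real.pi_pos, hu.2, hu.1] : -(2 * π) < u)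
            (by nlinarith [Real.pi_pos, hu.2] : u < 2 * π)).mp h
          exact hu0.ne' this
      constructor
      · simp only [Function.mem_support]
        have : (0:ℝ) < u ^ (-1 - 2 * H) := Real.rpow_pos_of_pos hu0 _
        exact ne_of_gt (mul_pos (by linarith) this)
      · exact hu0
  · filter_upwards [ae_restrict_mem measurableSet_Ioi] with u hu
    have hu0 : (0:ℝ) < u := hu
    have h1 : 0 ≤ 1 - Real.cos u := by nlinarith [Real.cos_le_one u]
    exact mul_nonneg h1 (Real.rpow_nonneg hu0.le _)

open Finset

/-- The fBm covariance `R(t,s) = ½(t^{2H} + s^{2H} - |t-s|^{2H})`, `H ∈ (0,1)`, is a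
symmetric positive semidefinite kernel on `[0,∞)`. -/
theorem fBm_covariance_posSemidef
    (H : ℝ) (hH : H ∈ Set.Ioo (0 : ℝ) 1)
    (R : ℝ → ℝ → ℝ)
    (hR : ∀ u v : ℝ, R u v = (u ^ (2 * H) + v ^ (2 * H) - |u - v| ^ (2 * H)) / 2) :
    (∀ u v : ℝ, 0 ≤ u → 0 ≤ v → R u v = R v u) ∧
    (∀ (n : ℕ) (t : Fin n → ℝ) (a : Fin n → ℝ), (∀ i, 0 ≤ t i) →
      0 ≤ ∑ i : Fin n, ∑ j : Fin n, a i * a j * R (t i) (t j)) := by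
  obtain ⟨hH0, hH1⟩ := hH
  constructor
  · intro u v _ _
    rw [hR, hR, abs_sub_comm]
    ring
  · intro n t a ht
    set Iv := ∫ u in Set.Ioi (0:ℝ), (1 - Real.cos u) * u ^ (-1 - 2 * H) with hIv
    have hIpos : 0 < Iv :=
      fBm_aux_I_pos hH0 hH1 (by simpa using fBm_aux_integrable hH0 hH1 1)
    set F : Fin n → Fin n → ℝ → ℝ := fun i j u =>
      a i * a j * ((1 - Real.cos (t i * u)) * u ^ (-1 - 2 * H)
        + (1 - Real.cos (t j * u)) * u ^ (-1 - 2 * H)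
        - (1 - Real.cos ((t i - t j) * u)) * u ^ (-1 - 2 * H)) with hF
    have hFint : ∀ i j, IntegrableOn (F i j) (Set.Ioi 0) := fun i j =>
      (((fBm_aux_integrable hH0 hH1 (t i)).add (fBm_aux_integrable hH0 hH1 (t j))).sub
        (fBm_aux_integrable hH0 hH1 (t i - t j))).const_mul _
    have hFval : ∀ i j, (∫ u in Set.Ioi (0:ℝ), F i j u)
        = Iv * (2 * (a i * a j * R (t i) (t j))) := by
      intro i j
      have e3 : (∫ u in Set.Ioi (0:ℝ), (1 - Real.cos ((t i - t j) * u)) * u ^ (-1 - 2 * H))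
          = |t i - t j| ^ (2 * H) * Iv := by
        rw [← fBm_aux_scaling hH0 (abs_nonneg (t i - t j))]
        refine setIntegral_congr_fun measurableSet_Ioi fun u hu => ?_
        have hc : Real.cos ((t i - t j) * u) = Real.cos (|t i - t j| * u) := by
          rcases abs_cases (t i - t j) with ⟨h, _⟩ | ⟨h, _⟩ <;> rw [h]
          rw [neg_mul, Real.cos_neg]
        rw [hc]
      have e1 := fBm_aux_scaling hH0 (ht i)
      have e2 := fBm_aux_scaling hH0 (ht j)
      have h1 := fBm_aux_integrable hH0 hH1 (t i)
      have h2 := fBm_aux_integrable hH0 hH1 (t j)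
      have h3 := fBm_aux_integrable hH0 hH1 (t i - t j)
      have h12 : IntegrableOn (fun u : ℝ => (1 - Real.cos (t i * u)) * u ^ (-1 - 2 * H)
          + (1 - Real.cos (t j * u)) * u ^ (-1 - 2 * H)) (Set.Ioi 0) := h1.add h2
      simp only [hF]
      rw [integral_const_mul, integral_sub h12 h3, integral_add h1 h2, e1, e2, e3, hR]
      ring
    have hswap : (∫ u in Set.Ioi (0:ℝ), ∑ i : Fin n, ∑ j : Fin n, F i j u)
        = ∑ i : Fin n, ∑ j : Fin n, ∫ u in Set.Ioi (0:ℝ), F i j u := by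
      rw [MeasureTheory.integral_finset_sum _
        (fun i _ => integrable_finset_sum _ fun j _ => hFint i j)]
      exact Finset.sum_congr rfl fun i _ =>
        MeasureTheory.integral_finset_sum _ fun j _ => hFint i j
    have hkey : ∀ u ∈ Set.Ioi (0:ℝ), 0 ≤ ∑ i : Fin n, ∑ j : Fin n, F i j u := by
      intro u hu
      have hup : (0:ℝ) ≤ u ^ (-1 - 2 * H) := Real.rpow_nonneg (le_of_lt hu) _
      have hpt : ∀ i j : Fin n, F i j u
          = (a i * (1 - Real.cos (t i * u))) * (a j * (1 - Real.cos (t j * u))) * u ^ (-1 - 2 * H)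
            + (a i * Real.sin (t i * u)) * (a j * Real.sin (t j * u)) * u ^ (-1 - 2 * H) := by
        intro i j
        have hcos : Real.cos ((t i - t j) * u)
            = Real.cos (t i * u) * Real.cos (t j * u)
              + Real.sin (t i * u) * Real.sin (t j * u) := by
          rw [sub_mul, Real.cos_sub]
        simp only [hF]
        rw [hcos]
        ring
      have hsum : ∑ i : Fin n, ∑ j : Fin n, F i j u
          = ((∑ i : Fin n, a i * (1 - Real.cos (t i * u)))
              * (∑ j : Fin n, a j * (1 - Real.cos (t j * u)))
            + (∑ i : Fin n, a i * Real.sin (t i * u))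
              * (∑ j : Fin n, a j * Real.sin (t j * u))) * u ^ (-1 - 2 * H) := by
        rw [Finset.sum_mul_sum, Finset.sum_mul_sum, add_mul, Finset.sum_mul, Finset.sum_mul,
          ← Finset.sum_add_distrib]
        refine Finset.sum_congr rfl fun i _ => ?_
        rw [Finset.sum_mul, Finset.sum_mul, ← Finset.sum_add_distrib]
        exact Finset.sum_congr rfl fun j _ => hpt i j
      rw [hsum]
      have h1 : 0 ≤ (∑ i : Fin n, a i * (1 - Real.cos (t i * u)))
          * (∑ j : Fin n, a j * (1 - Real.cos (t j * u))) := mul_self_nonneg _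
      have h2 : 0 ≤ (∑ i : Fin n, a i * Real.sin (t i * u))
          * (∑ j : Fin n, a j * Real.sin (t j * u)) := mul_self_nonneg _
      exact mul_nonneg (by linarith) hup
    have hfinal : 0 ≤ Iv * (2 * ∑ i : Fin n, ∑ j : Fin n, a i * a j * R (t i) (t j)) := by
      calc (0:ℝ) ≤ ∫ u in Set.Ioi (0:ℝ), ∑ i : Fin n, ∑ j : Fin n, F i j u :=
            setIntegral_nonneg measurableSet_Ioi hkey
        _ = ∑ i : Fin n, ∑ j : Fin n, ∫ u in Set.Ioi (0:ℝ), F i j u := hswap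
        _ = ∑ i : Fin n, ∑ j : Fin n, Iv * (2 * (a i * a j * R (t i) (t j))) := by
            exact Finset.sum_congr rfl fun i _ => Finset.sum_congr rfl fun j _ => hFval i j
        _ = Iv * (2 * ∑ i : Fin n, ∑ j : Fin n, a i * a j * R (t i) (t j)) := by
            simp_rw [Finset.mul_sum]
    nlinarith [hIpos, hfinal]
end
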